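/- arXiv:1708.06580 — 5 statements merged into one kernel-verified Lean document; each statement's English description precedes it below -/
import Mathlib

section
/- Suppose X ∈ S^m and x ∈ ℝ^m satisfy: [[X, x],[x^T, 1]] ⪰ 0, diag(X) = x, and ⟨a_i a_i^T, X⟩ = b_i^2 for all i ∈ V\{t}.ingThen for all distinct i, j ∈ V\{t}, the squared linear constraint ⟨a_i a_j^T, X⟩ = b_i b_j holds automatically. -/
open Finset Matrix

/-- under the PSD block constraint, `diag X = x` and the diagonal squared
linear constraints `⟨aᵢaᵢᵀ, X⟩ = bᵢ²` for `i ≠ t`, the off-diagonal squared linear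
constraints `⟨aᵢaⱼᵀ, X⟩ = bᵢbⱼ` hold automatically for distinct `i, j ≠ t`. -/
theorem squared_linear_constraints_redundant {V : Type*} [Fintype V] [DecidableEq V]
    (m : ℕ) (s t : V) (a : V → Fin m → ℝ) (b : V → ℝ)
    (hb : ∀ i, b i = if i = s then 1 else if i = t then -1 else 0)
    (X : Matrix (Fin m) (Fin m) ℝ) (x : Fin m → ℝ)
    (hY : (Matrix.fromBlocks X (Matrix.of fun e (_ : Unit) => x e)
        (Matrix.of fun (_ : Unit) e => x e) 1).PosSemidef)
    (hdiag : ∀ e, X e e = x e)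
    (hsq : ∀ i, i ≠ t → ∑ e, ∑ f, a i e * a i f * X e f = (b i) ^ 2) :
    ∀ i j, i ≠ t → j ≠ t → i ≠ j →
      ∑ e, ∑ f, a i e * a j f * X e f = b i * b j := by
  -- X is PSD as a principal submatrix
  have hX : X.PosSemidef := by
    have := hY.submatrix (Sum.inl : Fin m → Fin m ⊕ Unit)
    exact this
  -- rewrite double sums as dot products
  have key : ∀ v w : Fin m → ℝ,
      ∑ e, ∑ f, v e * w f * X e f = v ⬝ᵥ (X *ᵥ w) := by
    intro v w
    simp only [dotProduct, Matrix.mulVec, dotProduct]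
    rw [Finset.sum_congr rfl]
    intro e _
    rw [Finset.mul_sum]
    exact Finset.sum_congr rfl fun f _ => by ring
  -- if b k = 0 then (X *ᵥ a k) = 0
  have hker : ∀ k, k ≠ t → b k = 0 → (X *ᵥ a k) = 0 := by
    intro k hkt hbk
    have h0 : a k ⬝ᵥ (X *ᵥ a k) = 0 := by
      rw [← key]; rw [hsq k hkt, hbk]; ring
    have := (hX.dotProduct_mulVec_zero_iff (a k)).mp (by simpa using h0)
    exact this
  intro i j hit hjt hij
  rw [key]
  -- at least one of b i, b j is zero
  by_cases hjs : j = s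
  · -- then i ≠ s, so b i = 0
    have his : i ≠ s := fun h => hij (h.trans hjs.symm)
    have hbi : b i = 0 := by rw [hb i]; simp [his, hit]
    have hXi : X *ᵥ a i = 0 := hker i hit hbi
    have hsym : Xᵀ = X := hX.1
    have h1 : a i ⬝ᵥ X *ᵥ a j = (Xᵀ *ᵥ a i) ⬝ᵥ a j := by
      rw [Matrix.dotProduct_mulVec, Matrix.mulVec_transpose]
    rw [h1, hsym, hXi, zero_dotProduct, hbi, zero_mul]
  · have hbj : b j = 0 := by rw [hb j]; simp [hjs, hjt]
    rw [hker j hjt hbj, dotProduct_zero, hbj, mul_zero]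
end

section
/- Let Y = [[X, x],[x^T, 1]] be a feasible solution of the SDP relaxation SDP_L, i.e. Y ⪰ 0, diag(X) = x, a_s^T x = b_s, and ⟨a_i a_i^T, X⟩ = b_i^2 for all i ∈ V\{t}. Then the span of the vectors (a_i^T, −b_i)^T for i ∈ V\{t} is contained in the null space of Y. -/
open Finset

/-- if `Y = [[X, x], [xᵀ, 1]]` is feasible for the relaxation `SDP_L`,
then the span of the vectors `(aᵢᵀ, -bᵢ)ᵀ`, `i ∈ V \ {t}`, is contained in the null
space of `Y`. -/
theorem span_in_nullspace_SDPL {V : Type*} [Fintype V] [DecidableEq V] (m : ℕ)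
    (s t : V) (a : V → Fin m → ℝ) (b : V → ℝ)
    (hb : ∀ i, b i = if i = s then 1 else if i = t then -1 else 0)
    (X : Matrix (Fin m) (Fin m) ℝ) (x : Fin m → ℝ)
    (hY : (Matrix.fromBlocks X (Matrix.of fun e (_ : Unit) => x e)
        (Matrix.of fun (_ : Unit) e => x e) 1).PosSemidef)
    (hdiag : ∀ e, X e e = x e)
    (hs : ∑ e, a s e * x e = b s)
    (hsq : ∀ i, i ≠ t → ∑ e, ∑ f, a i e * a i f * X e f = (b i) ^ 2) :
    ∀ u ∈ Submodule.span ℝ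
        {v : Fin m ⊕ Unit → ℝ | ∃ i, i ≠ t ∧ v = Sum.elim (a i) (fun _ => -(b i))},
      (Matrix.fromBlocks X (Matrix.of fun e (_ : Unit) => x e)
        (Matrix.of fun (_ : Unit) e => x e) 1).mulVec u = 0 := by
  set Y := Matrix.fromBlocks X (Matrix.of fun e (_ : Unit) => x e)
      (Matrix.of fun (_ : Unit) e => x e) 1 with hYdef
  have key : ∀ u ∈ {v : Fin m ⊕ Unit → ℝ |
      ∃ i, i ≠ t ∧ v = Sum.elim (a i) (fun _ => -(b i))}, Y.mulVec u = 0 := by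
    rintro u ⟨i, hit, rfl⟩
    rw [← hY.dotProduct_mulVec_zero_iff]
    have hax : b i * (∑ e, a i e * x e) = b i * b i := by
      by_cases his : i = s
      · subst his; rw [hs]
      · have : b i = 0 := by rw [hb i]; simp [his, hit]
        simp [this]
    have expand : dotProduct (star (Sum.elim (a i) (fun _ => -(b i))))
        (Y.mulVec (Sum.elim (a i) (fun _ => -(b i))))
        = (∑ e, ∑ f, a i e * a i f * X e f) - b i * (∑ e, a i e * x e)
          - b i * (∑ e, a i e * x e) + b i * b i := by
      simp only [hYdef, dotProduct, Matrix.mulVec, dotProduct,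
        Fintype.sum_sum_type, Matrix.fromBlocks_apply₁₁,
        Matrix.fromBlocks_apply₁₂, Matrix.fromBlocks_apply₂₁,
        Matrix.fromBlocks_apply₂₂, Sum.elim_inl, Sum.elim_inr,
        Matrix.of_apply, Matrix.one_apply_eq, star_trivial,
        Finset.univ_unique, Finset.sum_singleton,
        mul_add, add_mul, mul_neg, neg_mul, mul_one, one_mul,
        Finset.sum_add_distrib, Finset.mul_sum, Finset.sum_neg_distrib]
      have h1 : ∀ e, ∑ f, a i e * (X e f * a i f) = ∑ f, a i e * a i f * X e f := by
        intro e; apply Finset.sum_congr rfl; intro f _; ring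
      have h2 : (∑ e, a i e * (x e * b i)) = b i * ∑ e, a i e * x e := by
        rw [Finset.mul_sum]; apply Finset.sum_congr rfl; intro e _; ring
      have h3 : (∑ e, b i * (x e * a i e)) = b i * ∑ e, a i e * x e := by
        rw [Finset.mul_sum]; apply Finset.sum_congr rfl; intro e _; ring
      simp only [h1, h2, h3]
      ring_nf
      have h4 : (∑ e, b i * a i e * x e) = b i * ∑ e, a i e * x e := by
        rw [Finset.mul_sum]; apply Finset.sum_congr rfl; intro e _; ring
      rw [h4]; ring
    rw [expand, hsq i hit, hax]
    ring
  intro u hu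
  have : Submodule.span ℝ {v : Fin m ⊕ Unit → ℝ |
      ∃ i, i ≠ t ∧ v = Sum.elim (a i) (fun _ => -(b i))} ≤ LinearMap.ker Y.mulVecLin :=
    Submodule.span_le.2 (fun v hv => key v hv)
  exact this hu
end

section
/- Let (X,x) be feasible for SDP_NL on a directed acyclic graph G (i.e., [[X,x],[x^T,1]] ⪰ 0, diag(X) = x, a_s^T x = 1, ⟨a_i a_i^T, X⟩ = b_i^2 for all i ≠ t, and X ≥ 0 entrywise). Then for any two arcs e, f such that no s–t path of G contains both e and f, the entry X_{e,f} equals 0. -/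
open Finset

inductive ArcPath {n m : ℕ} (src tgt : Fin m → Fin (n + 1)) :
    Fin (n + 1) → Fin (n + 1) → List (Fin m) → Prop
  | nil (u : Fin (n + 1)) : ArcPath src tgt u u []
  | cons (g : Fin m) {v : Fin (n + 1)} {l : List (Fin m)} :
      ArcPath src tgt (tgt g) v l → ArcPath src tgt (src g) v (g :: l)

namespace ArcPath

variable {n m : ℕ} {src tgt : Fin m → Fin (n + 1)} {u v w : Fin (n + 1)} {l l' : List (Fin m)}

theorem eq_of_nil (h : ArcPath src tgt u v []) : u = v := by
  cases h; rfl

theorem append (h : ArcPath src tgt u v l) (h' : ArcPath src tgt v w l') :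
    ArcPath src tgt u w (l ++ l') := by
  induction h with
  | nil => simpa using h'
  | cons g _ ih => exact .cons g (ih h')

theorem src_head (h : ArcPath src tgt u v l) (i : ℕ) (hi : i < l.length) (hz : i = 0) :
    src (l.get ⟨i, hi⟩) = u := by
  induction h with
  | nil => simp at hi
  | cons g hp ih => subst hz; simp

theorem link (h : ArcPath src tgt u v l) (i : ℕ) (hi : i < l.length)
    (hi' : i + 1 < l.length) :
    tgt (l.get ⟨i, hi⟩) = src (l.get ⟨i + 1, hi'⟩) := by
  induction h generalizing i with
  | nil => simp at hi
  | cons g hp ih =>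
    match i with
    | 0 =>
      simp only [List.get]
      exact (hp.src_head 0 (by simpa using hi') rfl).symm
    | j + 1 =>
      simp only [List.get]
      exact ih j (by simpa using hi) (by simpa using hi')

theorem tgt_last (h : ArcPath src tgt u v l) (i : ℕ) (hi : i < l.length)
    (hi' : i + 1 = l.length) :
    tgt (l.get ⟨i, hi⟩) = v := by
  induction h generalizing i with
  | nil => simp at hi
  | @cons g v' l' hp ih =>
    match i with
    | 0 =>
      simp only [List.get]
      have hl : l' = [] := by simpa using hi'.symm
      subst hl
      exact hp.eq_of_nil
    | j + 1 =>
      simp only [List.get]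
      exact ih j (by simpa using hi) (by simpa using hi')

theorem cross (h : ArcPath src tgt u v l) (k : ℕ)
    (hk1 : (u : ℕ) ≤ k) (hk2 : k < (v : ℕ)) :
    ∃ g ∈ l, (src g : ℕ) ≤ k ∧ k < (tgt g : ℕ) := by
  induction h with
  | nil u => omega
  | cons g hp ih =>
    by_cases hgk : k < (tgt g : ℕ)
    · exact ⟨g, by simp, hk1, hgk⟩
    · obtain ⟨g', hg', hc⟩ := ih (by omega) hk2
      exact ⟨g', by simp [hg'], hc⟩

end ArcPath


/-- if `(X, x)` is feasible for `SDP_NL` on a DAG (given with a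
topological ordering of its vertices) and no `s`-`t` path contains both arcs `e` and
`f`, then `X_{e,f} = 0`. -/
theorem zero_pattern_SDP_NL (n m : ℕ) (src tgt : Fin m → Fin (n + 1))
    (hdag : ∀ e, src e < tgt e)
    (s t : Fin (n + 1)) (hs : s = 0) (ht : t = Fin.last n)
    (a : Fin (n + 1) → Fin m → ℝ)
    (ha : ∀ i e, a i e = if src e = i then 1 else if tgt e = i then -1 else 0)
    (b : Fin (n + 1) → ℝ)
    (hb : ∀ i, b i = if i = s then 1 else if i = t then -1 else 0)
    (X : Matrix (Fin m) (Fin m) ℝ) (x : Fin m → ℝ)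
    (hY : (Matrix.fromBlocks X (Matrix.of fun e (_ : Unit) => x e)
        (Matrix.of fun (_ : Unit) e => x e) 1).PosSemidef)
    (hdiag : ∀ e, X e e = x e)
    (hsx : ∑ e, a s e * x e = b s)
    (hsq : ∀ i, i ≠ t → ∑ e, ∑ f, a i e * a i f * X e f = (b i) ^ 2)
    (hXnn : ∀ e f, 0 ≤ X e f)
    (e f : Fin m)
    (hNoPath : ¬ ∃ (len : ℕ) (c : Fin (len + 1) → Fin (n + 1)) (es : Fin len → Fin m),
      (∀ r : Fin len, src (es r) = c r.castSucc ∧ tgt (es r) = c r.succ) ∧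
      Function.Injective c ∧ c 0 = s ∧ c (Fin.last len) = t ∧
      (∃ r : Fin len, es r = e) ∧ (∃ r : Fin len, es r = f)) :
    X e f = 0 := by
  by_contra hne
  -- basic facts
  have hn : 0 < n := by have h1 := hdag e; have h2 := (tgt e).isLt; omega
  have hst : s ≠ t := by
    rw [hs, ht]; intro hh
    have := congrArg Fin.val hh
    simp [Fin.last] at this; omega
  have htv : (t : ℕ) = n := by rw [ht]; rfl
  have hsv : (s : ℕ) = 0 := by rw [hs]; rfl
  -- symmetry of X
  have hXsym : ∀ g g', X g g' = X g' g := by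
    intro g g'
    have h1 := congrFun (congrFun hY.1 (Sum.inl g : Fin m ⊕ Unit)) (Sum.inl g')
    simpa [Matrix.conjTranspose_apply, Matrix.fromBlocks] using h1.symm
  -- conservation from PSD
  have hcons : ∀ i, i ≠ t → ∀ g, (∑ f', a i f' * X g f') = b i * x g := by
    intro i hit g
    set M := Matrix.fromBlocks X (Matrix.of fun e (_ : Unit) => x e)
        (Matrix.of fun (_ : Unit) e => x e) (1 : Matrix Unit Unit ℝ) with hM
    set w : Fin m ⊕ Unit → ℝ := Sum.elim (a i) (fun _ => -b i) with hw
    have hsw : star w = w := by funext j; simp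
    have hmv : ∀ e', (M.mulVec w) (Sum.inl e') = (∑ f', X e' f' * a i f') - x e' * b i := by
      intro e'
      rw [hM, hw]
      simp [Matrix.mulVec, dotProduct, Fintype.sum_sum_type, Matrix.fromBlocks]
      ring
    have hmvr : (M.mulVec w) (Sum.inr ()) = (∑ f', x f' * a i f') - b i := by
      rw [hM, hw]
      simp [Matrix.mulVec, dotProduct, Fintype.sum_sum_type, Matrix.fromBlocks]
      ring
    have hS1 : (∑ f', x f' * a i f') = ∑ e', a i e' * x e' :=
      Finset.sum_congr rfl (fun e' _ => by ring)
    have hquad : dotProduct (star w) (M.mulVec w) = 0 := by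
      rw [hsw]
      have hdp : dotProduct w (M.mulVec w) = (∑ e', a i e' * ((∑ f', X e' f' * a i f') - x e' * b i))
          + (- b i) * ((∑ f', x f' * a i f') - b i) := by
        rw [dotProduct, Fintype.sum_sum_type]
        congr 1
        · exact Finset.sum_congr rfl (fun e' _ => by rw [hmv e', hw]; simp)
        · simp only [Finset.univ_unique, Finset.sum_singleton]
          rw [hmvr, hw]
          simp
      rw [hdp]
      have hexp : (∑ e', a i e' * ((∑ f', X e' f' * a i f') - x e' * b i))
          = (∑ e', ∑ f', a i e' * a i f' * X e' f') - (∑ e', a i e' * x e') * b i := by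
        have step1 : ∀ e' : Fin m, a i e' * ((∑ f', X e' f' * a i f') - x e' * b i)
            = (∑ f', a i e' * a i f' * X e' f') - (a i e' * x e') * b i := by
          intro e'
          rw [mul_sub, Finset.mul_sum]
          congr 1
          · exact Finset.sum_congr rfl (fun f' _ => by ring)
          · ring
        rw [Finset.sum_congr rfl (fun e' _ => step1 e'), Finset.sum_sub_distrib,
          ← Finset.sum_mul]
      rw [hexp, hsq i hit, hS1]
      by_cases his : i = s
      · have hb1 : b i = 1 := by rw [hb, if_pos his]
        have hx1 : ∑ e', a i e' * x e' = 1 := by rw [his, hsx, hb, if_pos rfl]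
        rw [hb1, hx1]
        ring
      · have hbz : b i = 0 := by rw [hb, if_neg his, if_neg hit]
        rw [hbz]
        ring
    have hker := (hY.dotProduct_mulVec_zero_iff w).mp hquad
    have hg := congrFun hker (Sum.inl g)
    rw [hmv g] at hg
    have hcomm : ∑ f', a i f' * X g f' = ∑ f', X g f' * a i f' :=
      Finset.sum_congr rfl (fun f' _ => by ring)
    rw [hcomm]
    have hg0 : (∑ f', X g f' * a i f') - x g * b i = 0 := hg
    linarith [hg0]
  -- the flow given by column f
  set F : Fin m → ℝ := fun g => X f g with hFdef
  have hF0 : ∀ g, 0 ≤ F g := fun g => hXnn f g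
  have hFf : F f = x f := hdiag f
  have hFe : 0 < F e := by
    have h1 : X f e = X e f := hXsym f e
    have h2 := hXnn e f
    have : 0 < X e f := lt_of_le_of_ne h2 (Ne.symm hne)
    simpa [hFdef, h1]
  have hconsF : ∀ i, i ≠ t → ∑ g, a i g * F g = b i * x f := fun i hi => hcons i hi f
  -- vertex split
  have hsplit : ∀ v : Fin (n + 1), v ≠ s → v ≠ t →
      (∑ g ∈ univ.filter (fun g => src g = v), F g)
        = ∑ g ∈ univ.filter (fun g => tgt g = v), F g := by
    intro v hvs hvt
    have hpt : ∀ g : Fin m, a v g * F g =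
        (if src g = v then F g else 0) - (if tgt g = v then F g else 0) := by
      intro g
      rw [ha]
      have hne' := (hdag g).ne
      split_ifs with hc1 hc2 <;> try ring
      exact absurd (hc1.trans hc2.symm) hne'
    have hbz : b v = 0 := by rw [hb]; simp [hvs, hvt]
    have h0 := hconsF v hvt
    rw [hbz, zero_mul] at h0
    rw [Finset.sum_congr rfl (fun g _ => hpt g), Finset.sum_sub_distrib] at h0
    rw [Finset.sum_filter, Finset.sum_filter]
    linarith
  -- cut lemma
  have hcut : ∀ k : ℕ, k < n →
      ∑ g ∈ univ.filter (fun g => (src g : ℕ) ≤ k ∧ k < (tgt g : ℕ)), F g = x f := by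
    intro k hk
    set S : Finset (Fin (n + 1)) := univ.filter (fun i => (i : ℕ) ≤ k) with hSdef
    have hSsum : ∑ i ∈ S, (∑ g, a i g * F g) = x f := by
      have hcongr : ∀ i ∈ S, (∑ g, a i g * F g) = b i * x f := by
        intro i hi
        apply hconsF
        intro hit
        rw [hSdef, Finset.mem_filter] at hi
        rw [hit, htv] at hi
        omega
      rw [Finset.sum_congr rfl hcongr, ← Finset.sum_mul]
      have hbsum : ∑ i ∈ S, b i = 1 := by
        have hpt : ∀ i ∈ S, b i = if s = i then (1:ℝ) else 0 := by
          intro i hi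
          rw [hb]
          rw [hSdef, Finset.mem_filter] at hi
          have hit : i ≠ t := by
            intro hit; rw [hit, htv] at hi; omega
          by_cases his : i = s
          · simp [his]
          · simp [his, hit, Ne.symm his]
        rw [Finset.sum_congr rfl hpt, Finset.sum_ite_eq]
        have hsS : s ∈ S := by
          rw [hSdef, Finset.mem_filter]
          exact ⟨Finset.mem_univ _, by omega⟩
        simp [hsS]
      rw [hbsum, one_mul]
    have hswap : ∑ i ∈ S, ∑ g, a i g * F g = ∑ g, (∑ i ∈ S, a i g) * F g := by
      rw [Finset.sum_comm]
      apply Finset.sum_congr rfl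
      intro g _
      rw [Finset.sum_mul]
    have hinner : ∀ g, (∑ i ∈ S, a i g) = if (src g : ℕ) ≤ k ∧ k < (tgt g : ℕ) then (1:ℝ) else 0 := by
      intro g
      have hpt : ∀ i, a i g = (if src g = i then (1:ℝ) else 0) + (if tgt g = i then -1 else 0) := by
        intro i
        rw [ha]
        have hne' := (hdag g).ne
        split_ifs with hc1 hc2 <;> try ring
        exact absurd (hc1.trans hc2.symm) hne'
      rw [Finset.sum_congr rfl (fun i _ => hpt i), Finset.sum_add_distrib,
        Finset.sum_ite_eq, Finset.sum_ite_eq]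
      have hmemS : ∀ j : Fin (n+1), j ∈ S ↔ (j : ℕ) ≤ k := by
        intro j; rw [hSdef, Finset.mem_filter]; simp
      have hd := hdag g
      rw [Fin.lt_iff_val_lt_val] at hd
      by_cases h1 : (src g : ℕ) ≤ k <;> by_cases h2 : (tgt g : ℕ) ≤ k
      · rw [if_pos ((hmemS _).mpr h1), if_pos ((hmemS _).mpr h2), if_neg (by omega)]
        ring
      · rw [if_pos ((hmemS _).mpr h1), if_neg (fun hh => h2 ((hmemS _).mp hh)),
          if_pos ⟨h1, by omega⟩]
        ring
      · omega
      · rw [if_neg (fun hh => h1 ((hmemS _).mp hh)), if_neg (fun hh => h2 ((hmemS _).mp hh)),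
          if_neg (by omega)]
        ring
    rw [hswap] at hSsum
    have hSsum2 : ∑ g, (if (src g : ℕ) ≤ k ∧ k < (tgt g : ℕ) then (1:ℝ) else 0) * F g = x f := by
      rw [← hSsum]
      exact Finset.sum_congr rfl (fun g _ => by rw [hinner g])
    rw [← hSsum2, Finset.sum_filter]
    exact Finset.sum_congr rfl (fun g _ => by
      split_ifs with h
      · rw [one_mul]
      · rw [zero_mul])
  -- forward path
  have hfwd : ∀ N : ℕ, ∀ v : Fin (n + 1), n - (v : ℕ) ≤ N →
      (∃ g, tgt g = v ∧ 0 < F g) →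
      ∃ l, ArcPath src tgt v t l ∧ ∀ g ∈ l, 0 < F g := by
    intro N
    induction N with
    | zero =>
      intro v hv _
      have hvt : v = t := by
        apply Fin.ext; rw [htv]; have := v.isLt; omega
      exact ⟨[], hvt ▸ ArcPath.nil v, by simp⟩
    | succ N ih =>
      intro v hv hg
      by_cases hvt : v = t
      · exact ⟨[], hvt ▸ ArcPath.nil v, by simp⟩
      · obtain ⟨g, hgv, hgpos⟩ := hg
        have hvs : v ≠ s := by
          intro hvs'
          have h1 : (v : ℕ) = 0 := by rw [hvs', hsv]
          have h2 := hdag g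
          rw [Fin.lt_iff_val_lt_val, hgv] at h2
          omega
        have hsp := hsplit v hvs hvt
        have hpos2 : 0 < ∑ g' ∈ univ.filter (fun g' => tgt g' = v), F g' := by
          have hmem : g ∈ univ.filter (fun g' => tgt g' = v) := by simp [hgv]
          have := Finset.single_le_sum (f := F) (fun i _ => hF0 i) hmem
          linarith
        rw [← hsp] at hpos2
        have hpos3 : ∑ g' ∈ univ.filter (fun g' => src g' = v), (fun _ => (0:ℝ)) g'
            < ∑ g' ∈ univ.filter (fun g' => src g' = v), F g' := by simpa using hpos2
        obtain ⟨g', hg'mem, hg'pos⟩ := Finset.exists_lt_of_sum_lt hpos3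
        have hg'src : src g' = v := (Finset.mem_filter.mp hg'mem).2
        have hlt : (v : ℕ) < (tgt g' : ℕ) := by
          have h2 := hdag g'
          rw [Fin.lt_iff_val_lt_val, hg'src] at h2
          exact h2
        have hvn : (v : ℕ) ≠ n := fun hh => hvt (Fin.ext (by rw [hh, htv]))
        obtain ⟨l, hl, hlp⟩ := ih (tgt g') (by have := v.isLt; omega) ⟨g', rfl, hg'pos⟩
        refine ⟨g' :: l, ?_, ?_⟩
        · rw [← hg'src]; exact ArcPath.cons g' hl
        · intro g'' hg''
          rcases List.mem_cons.mp hg'' with h | h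
          · exact h ▸ hg'pos
          · exact hlp _ h
  -- backward path
  have hbwd : ∀ N : ℕ, ∀ v : Fin (n + 1), (v : ℕ) ≤ N →
      (∃ g, src g = v ∧ 0 < F g) →
      ∃ l, ArcPath src tgt s v l ∧ ∀ g ∈ l, 0 < F g := by
    intro N
    induction N with
    | zero =>
      intro v hv _
      have hvs : v = s := by apply Fin.ext; rw [hsv]; omega
      exact ⟨[], hvs ▸ ArcPath.nil v, by simp⟩
    | succ N ih =>
      intro v hv hg
      by_cases hvs : v = s
      · exact ⟨[], hvs ▸ ArcPath.nil v, by simp⟩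
      · obtain ⟨g, hgv, hgpos⟩ := hg
        have hvt : v ≠ t := by
          intro hvt'
          have h2 := hdag g
          rw [Fin.lt_iff_val_lt_val, hgv, hvt', htv] at h2
          have := (tgt g).isLt
          omega
        have hsp := hsplit v hvs hvt
        have hpos2 : 0 < ∑ g' ∈ univ.filter (fun g' => src g' = v), F g' := by
          have hmem : g ∈ univ.filter (fun g' => src g' = v) := by simp [hgv]
          have := Finset.single_le_sum (f := F) (fun i _ => hF0 i) hmem
          linarith
        rw [hsp] at hpos2
        have hpos3 : ∑ g' ∈ univ.filter (fun g' => tgt g' = v), (fun _ => (0:ℝ)) g'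
            < ∑ g' ∈ univ.filter (fun g' => tgt g' = v), F g' := by simpa using hpos2
        obtain ⟨g', hg'mem, hg'pos⟩ := Finset.exists_lt_of_sum_lt hpos3
        have hg'tgt : tgt g' = v := (Finset.mem_filter.mp hg'mem).2
        have hlt : (src g' : ℕ) < (v : ℕ) := by
          have h2 := hdag g'
          rw [Fin.lt_iff_val_lt_val, hg'tgt] at h2
          exact h2
        obtain ⟨l, hl, hlp⟩ := ih (src g') (by omega) ⟨g', rfl, hg'pos⟩
        refine ⟨l ++ [g'], ?_, ?_⟩
        · exact hl.append (ArcPath.cons g' (hg'tgt ▸ ArcPath.nil (tgt g')))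
        · intro g'' hg''
          rcases List.mem_append.mp hg'' with h | h
          · exact hlp _ h
          · rcases List.mem_singleton.mp h with rfl
            exact hg'pos
  obtain ⟨l1, h1, p1⟩ := hbwd (src e) (src e) le_rfl ⟨e, rfl, hFe⟩
  obtain ⟨l2, h2, p2⟩ := hfwd (n - (tgt e : ℕ)) (tgt e) le_rfl ⟨e, rfl, hFe⟩
  set L : List (Fin m) := l1 ++ e :: l2 with hLdef
  have hL : ArcPath src tgt s t L := h1.append (ArcPath.cons e h2)
  have hLpos : ∀ g ∈ L, 0 < F g := by
    intro g hg
    rw [hLdef] at hg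
    rcases List.mem_append.mp hg with h | h
    · exact p1 g h
    · rcases List.mem_cons.mp h with h | h
      · exact h ▸ hFe
      · exact p2 g h
  have heL : e ∈ L := by simp [hLdef]
  have hfL : f ∈ L := by
    have hk2 : (src f : ℕ) < n := by have := hdag f; have := (tgt f).isLt; omega
    obtain ⟨g, hgL, hgc1, hgc2⟩ := hL.cross (src f : ℕ) (by omega) (lt_of_lt_of_eq hk2 htv.symm)
    by_cases hgf : g = f
    · exact hgf ▸ hgL
    · exfalso
      have hcut' := hcut (src f : ℕ) hk2
      have hfmem : f ∈ univ.filter (fun g => (src g : ℕ) ≤ (src f : ℕ) ∧ (src f : ℕ) < (tgt g : ℕ)) := by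
        simp [hdag f]
      have hgmem : g ∈ (univ.filter (fun g => (src g : ℕ) ≤ (src f : ℕ) ∧ (src f : ℕ) < (tgt g : ℕ))).erase f := by
        rw [Finset.mem_erase]
        exact ⟨hgf, Finset.mem_filter.mpr ⟨Finset.mem_univ _, hgc1, hgc2⟩⟩
      have hzero : ∑ g' ∈ (univ.filter (fun g => (src g : ℕ) ≤ (src f : ℕ) ∧ (src f : ℕ) < (tgt g : ℕ))).erase f, F g' = 0 := by
        have := Finset.add_sum_erase _ F hfmem
        rw [hcut'] at this
        rw [hFf] at this
        linarith
      have := (Finset.sum_eq_zero_iff_of_nonneg (fun g' _ => hF0 g')).mp hzero g hgmem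
      exact absurd this (ne_of_gt (hLpos g hgL))
  -- build the path witness
  apply hNoPath
  have hlen : 0 < L.length := List.length_pos_iff.mpr (List.ne_nil_of_mem heL)
  refine ⟨L.length,
    (fun r => if h : (r : ℕ) < L.length then src (L.get ⟨r, h⟩) else t),
    (fun r => L.get ⟨(r : ℕ), r.isLt⟩), ?_, ?_, ?_, ?_, ?_, ?_⟩
  · intro r
    constructor
    · simp only [Fin.coe_castSucc]
      rw [dif_pos r.isLt]
    · simp only [Fin.val_succ]
      by_cases hr : (r : ℕ) + 1 < L.length
      · rw [dif_pos hr]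
        exact hL.link (r : ℕ) r.isLt hr
      · rw [dif_neg hr]
        exact hL.tgt_last (r : ℕ) r.isLt (by have := r.isLt; omega)
  · apply StrictMono.injective
    rw [Fin.strictMono_iff_lt_succ]
    intro r
    simp only [Fin.coe_castSucc, Fin.val_succ]
    rw [dif_pos r.isLt]
    by_cases hr : (r : ℕ) + 1 < L.length
    · rw [dif_pos hr]
      rw [← hL.link (r : ℕ) r.isLt hr]
      exact hdag _
    · rw [dif_neg hr]
      rw [← hL.tgt_last (r : ℕ) r.isLt (by have := r.isLt; omega)]
      exact hdag _
  · have h0 : ((0 : Fin (L.length + 1)) : ℕ) < L.length := by simpa using hlen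
    simp only [dif_pos h0]
    exact hL.src_head 0 hlen rfl
  · have hlast : ¬ ((Fin.last L.length : Fin (L.length + 1)) : ℕ) < L.length := by simp
    simp only [dif_neg hlast]
  · obtain ⟨⟨i, hi⟩, hget⟩ := List.mem_iff_get.mp heL
    exact ⟨⟨i, hi⟩, hget⟩
  · obtain ⟨⟨i, hi⟩, hget⟩ := List.mem_iff_get.mp hfL
    exact ⟨⟨i, hi⟩, hget⟩
end

section
/- Let ā = Σ_{i ≠ t} y_i a_i and b̄ = y^T b for some y ∈ ℝ^{n−1}. If (X, x) is feasible for SDP_L (i.e., [[X,x],[x^T,1]] ⪰ 0, diag(X) = x, a_s^T x = b_s, ⟨a_i a_i^T, X⟩ = b_i^2 for i ≠ t), then ⟨ā ā^T, X⟩ = b̄^2 and ⟨a_i ā^T, X⟩ = b_i b̄ for all i ∈ V\{t}. -/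
open Finset Matrix

/-- squared linear constraints induced by a redundant linear constraint
`āᵀx = b̄`, where `ā = ∑_{i ≠ t} yᵢ aᵢ` and `b̄ = yᵀb`, are redundant in `SDP_L`:
any feasible `(X, x)` satisfies `⟨āāᵀ, X⟩ = b̄²` and `⟨aᵢāᵀ, X⟩ = bᵢ b̄` for `i ≠ t`. -/
theorem redundant_squared_linear_constraints {V : Type*} [Fintype V] [DecidableEq V]
    (m : ℕ) (s t : V) (a : V → Fin m → ℝ) (b : V → ℝ)
    (hb : ∀ i, b i = if i = s then 1 else if i = t then -1 else 0)
    (y : V → ℝ) (abar : Fin m → ℝ) (bbar : ℝ)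
    (habar : ∀ e, abar e = ∑ i ∈ Finset.univ.erase t, y i * a i e)
    (hbbar : bbar = ∑ i ∈ Finset.univ.erase t, y i * b i)
    (X : Matrix (Fin m) (Fin m) ℝ) (x : Fin m → ℝ)
    (hY : (Matrix.fromBlocks X (Matrix.of fun e (_ : Unit) => x e)
        (Matrix.of fun (_ : Unit) e => x e) 1).PosSemidef)
    (hdiag : ∀ e, X e e = x e)
    (hs : ∑ e, a s e * x e = b s)
    (hsq : ∀ i, i ≠ t → ∑ e, ∑ f, a i e * a i f * X e f = (b i) ^ 2) :
    (∑ e, ∑ f, abar e * abar f * X e f = bbar ^ 2) ∧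
    ∀ i, i ≠ t → ∑ e, ∑ f, a i e * abar f * X e f = b i * bbar := by
  -- key: for each i ≠ t, the block matrix annihilates (a i, -b i)
  have key : ∀ i, i ≠ t →
      (∀ e, ∑ f, X e f * a i f = b i * x e) ∧ (∑ e, a i e * x e = b i) := by
    intro i hi
    have hbi : b i * (∑ e, a i e * x e) = b i ^ 2 := by
      by_cases h : i = s
      · subst h; rw [hs]; ring
      · have hb0 : b i = 0 := by rw [hb]; simp [h, hi]
        simp [hb0]
    set v : Fin m ⊕ Unit → ℝ := Sum.elim (a i) (fun _ => -b i) with hv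
    have hq : star v ⬝ᵥ (Matrix.fromBlocks X (Matrix.of fun e (_ : Unit) => x e)
        (Matrix.of fun (_ : Unit) e => x e) 1) *ᵥ v = 0 := by
      simp only [hv, star_trivial, dotProduct, Matrix.mulVec,
        Fintype.sum_sum_type, Matrix.fromBlocks_apply₁₁, Matrix.fromBlocks_apply₁₂,
        Matrix.fromBlocks_apply₂₁, Matrix.fromBlocks_apply₂₂, Sum.elim_inl, Sum.elim_inr,
        Matrix.of_apply, Matrix.one_apply_eq, Finset.univ_unique, Finset.sum_const,
        Finset.card_singleton, one_smul]
      have e1 : ∑ e, a i e * (∑ f, X e f * a i f + x e * -b i)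
          = (∑ e, ∑ f, a i e * a i f * X e f) - b i * ∑ e, a i e * x e := by
        rw [Finset.mul_sum, ← Finset.sum_sub_distrib]
        refine Finset.sum_congr rfl fun e _ => ?_
        rw [mul_add, Finset.mul_sum]
        congr 1
        · exact Finset.sum_congr rfl fun f _ => by ring
        · ring
      have e2 : ∑ e, x e * a i e = ∑ e, a i e * x e :=
        Finset.sum_congr rfl fun e _ => mul_comm _ _
      rw [e1, e2, hsq i hi]
      nlinarith [hbi]
    have hzero := (hY.dotProduct_mulVec_zero_iff v).mp hq
    constructor
    · intro e
      have := congrFun hzero (Sum.inl e)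
      simp only [hv, Matrix.mulVec, dotProduct, Fintype.sum_sum_type,
        Matrix.fromBlocks_apply₁₁, Matrix.fromBlocks_apply₁₂, Sum.elim_inl, Sum.elim_inr,
        Matrix.of_apply, Finset.univ_unique, Finset.sum_const, Finset.card_singleton,
        one_smul, Pi.zero_apply] at this
      linarith [this]
    · have := congrFun hzero (Sum.inr ())
      simp only [hv, Matrix.mulVec, dotProduct, Fintype.sum_sum_type,
        Matrix.fromBlocks_apply₂₁, Matrix.fromBlocks_apply₂₂, Sum.elim_inl, Sum.elim_inr,
        Matrix.of_apply, Matrix.one_apply_eq, Finset.univ_unique, Finset.sum_const,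
        Finset.card_singleton, one_smul, Pi.zero_apply] at this
      have h2 : ∑ e, x e * a i e = b i := by linarith [this]
      calc ∑ e, a i e * x e = ∑ e, x e * a i e := by
            exact Finset.sum_congr rfl fun e _ => mul_comm _ _
        _ = b i := h2
  have hXabar : ∀ e, ∑ f, X e f * abar f = bbar * x e := by
    intro e
    simp_rw [habar, hbbar, Finset.mul_sum, Finset.sum_mul]
    rw [Finset.sum_comm]
    refine Finset.sum_congr rfl fun j hj => ?_
    have hj' : j ≠ t := Finset.ne_of_mem_erase hj
    calc ∑ f, X e f * (y j * a j f) = y j * ∑ f, X e f * a j f := by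
          rw [Finset.mul_sum]; exact Finset.sum_congr rfl fun f _ => by ring
      _ = y j * (b j * x e) := by rw [(key j hj').1 e]
      _ = y j * b j * x e := by ring
  have haxbar : ∑ e, abar e * x e = bbar := by
    simp_rw [habar, hbbar, Finset.sum_mul]
    rw [Finset.sum_comm]
    refine Finset.sum_congr rfl fun j hj => ?_
    have hj' : j ≠ t := Finset.ne_of_mem_erase hj
    calc ∑ e, y j * a j e * x e = y j * ∑ e, a j e * x e := by
          rw [Finset.mul_sum]; exact Finset.sum_congr rfl fun e _ => by ring
      _ = y j * b j := by rw [(key j hj').2]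
  constructor
  · calc ∑ e, ∑ f, abar e * abar f * X e f
        = ∑ e, abar e * ∑ f, X e f * abar f := by
          refine Finset.sum_congr rfl fun e _ => ?_
          rw [Finset.mul_sum]; exact Finset.sum_congr rfl fun f _ => by ring
      _ = ∑ e, abar e * (bbar * x e) := by
          exact Finset.sum_congr rfl fun e _ => by rw [hXabar e]
      _ = bbar * ∑ e, abar e * x e := by
          rw [Finset.mul_sum]; exact Finset.sum_congr rfl fun e _ => by ring
      _ = bbar ^ 2 := by rw [haxbar]; ring
  · intro i hi
    calc ∑ e, ∑ f, a i e * abar f * X e f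
        = ∑ e, a i e * ∑ f, X e f * abar f := by
          refine Finset.sum_congr rfl fun e _ => ?_
          rw [Finset.mul_sum]; exact Finset.sum_congr rfl fun f _ => by ring
      _ = ∑ e, a i e * (bbar * x e) := by
          exact Finset.sum_congr rfl fun e _ => by rw [hXabar e]
      _ = bbar * ∑ e, a i e * x e := by
          rw [Finset.mul_sum]; exact Finset.sum_congr rfl fun e _ => by ring
      _ = b i * bbar := by rw [(key i hi).2]; ring
end

section
/- For the grid graph G_{p,q}, the (p−1)(q−1) cycle vectors (w_{ij}^T, 0)^T arising from the unit square cycles (v_{i,j}, v_{i,j+1}, v_{i+1,j+1}, v_{i+1,j}), together with (w^T, 1)^T where w is the characteristic vector of the path (v_{1,1},…,v_{1,q},…,v_{p,q}), are m − n + 2 linearly independent vectors in ℝ^{m+1} that are orthogonal to every column (a_k^T, −b_k)^T of T, k ∈ V\{t}. -/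
open Finset

/-- Vertices of the grid graph `G_{p,q}` (0-indexed). -/
abbrev GridVertex (p q : ℕ) := Fin p × Fin q

/-- Arcs of the grid graph `G_{p,q}`: horizontal arcs `(i,j) → (i,j+1)` (left summand)
and vertical arcs `(i,j) → (i+1,j)` (right summand); there are `2pq - p - q` of them. -/
abbrev GridArc (p q : ℕ) := (Fin p × Fin (q - 1)) ⊕ (Fin (p - 1) × Fin q)

/-- Source vertex of a grid arc. -/
def gridSrc (p q : ℕ) : GridArc p q → GridVertex p q
  | .inl (r, c) => (r, ⟨c.1, by have := c.isLt; omega⟩)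
  | .inr (r, c) => (⟨r.1, by have := r.isLt; omega⟩, c)

/-- Target vertex of a grid arc. -/
def gridTgt (p q : ℕ) : GridArc p q → GridVertex p q
  | .inl (r, c) => (r, ⟨c.1 + 1, by have := c.isLt; omega⟩)
  | .inr (r, c) => (⟨r.1 + 1, by have := r.isLt; omega⟩, c)

/-- Row of the incidence matrix of `G_{p,q}` at vertex `k`. -/
def gridIncidence (p q : ℕ) (k : GridVertex p q) (e : GridArc p q) : ℝ :=
  if gridSrc p q e = k then 1 else if gridTgt p q e = k then -1 else 0

/-- The vector `w_{ij}` induced by the unit square cycle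
`(v_{i,j}, v_{i,j+1}, v_{i+1,j+1}, v_{i+1,j})`. -/
def squareCycleVec (p q : ℕ) (ij : Fin (p - 1) × Fin (q - 1)) : GridArc p q → ℝ
  | .inl (r, c) =>
      if (r.1, c.1) = (ij.1.1, ij.2.1) then 1
      else if (r.1, c.1) = (ij.1.1 + 1, ij.2.1) then -1 else 0
  | .inr (r, c) =>
      if (r.1, c.1) = (ij.1.1, ij.2.1 + 1) then 1
      else if (r.1, c.1) = (ij.1.1, ij.2.1) then -1 else 0

/-- The characteristic vector of the path `(v_{1,1}, …, v_{1,q}, …, v_{p,q})` going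
along the first row and then down the last column. -/
def hookPathVec (p q : ℕ) : GridArc p q → ℝ
  | .inl (r, _) => if r.1 = 0 then 1 else 0
  | .inr (_, c) => if c.1 = q - 1 then 1 else 0

/- ### Auxiliary lemmas -/

lemma sum_cond_eq {α : Type*} [Fintype α] [DecidableEq α] (g : α → ℝ) (P : α → Prop)
    [DecidablePred P] (a : α) (h : ∀ x, P x ↔ x = a) :
    ∑ x, (if P x then g x else 0) = g a := by
  simp only [h]
  simp

lemma sum_cond_zero {α : Type*} [Fintype α] (g : α → ℝ) (P : α → Prop)
    [DecidablePred P] (h : ∀ x, ¬ P x) : ∑ x, (if P x then g x else 0) = 0 := by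
  simp [h]

lemma ite_split (A B : Prop) [Decidable A] [Decidable B] (h : A → ¬ B) (v : ℝ) :
    (if A then (1:ℝ) else if B then -1 else 0) * v
      = (if A then v else 0) - (if B then v else 0) := by
  by_cases hA : A
  · simp [hA, h hA]
  · by_cases hB : B <;> simp [hA, hB]

lemma ite_split' (A B : Prop) [Decidable A] [Decidable B] (h : A → ¬ B) (v : ℝ) :
    v * (if A then (1:ℝ) else if B then -1 else 0)
      = (if A then v else 0) - (if B then v else 0) := by
  rw [mul_comm]; exact ite_split A B h v

lemma pair_eq_iff {n m : ℕ} (x : Fin n × Fin m) (a b : ℕ) (ha : a < n) (hb : b < m) :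
    (x.1.1, x.2.1) = (a, b) ↔ x = (⟨a, ha⟩, ⟨b, hb⟩) := by
  rw [Prod.ext_iff, Prod.ext_iff, Fin.ext_iff, Fin.ext_iff]

lemma sum_pair_delta {n m : ℕ} (g : Fin n × Fin m → ℝ) (a c : ℕ) (ha : a < n) (hc : c < m) :
    ∑ x : Fin n × Fin m, (if (x.1.1, x.2.1) = (a, c) then g x else 0) = g (⟨a, ha⟩, ⟨c, hc⟩) :=
  sum_cond_eq g _ _ (fun x => pair_eq_iff x a c ha hc)

/-- for the grid graph `G_{p,q}`, the `(p-1)(q-1)` augmented unit-square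
cycle vectors `(w_{ij}ᵀ, 0)ᵀ` together with `(wᵀ, 1)ᵀ` (with `w` the characteristic
vector of the hook path) are `m - n + 2` linearly independent vectors of `ℝ^{m+1}`
orthogonal to every column `(a_kᵀ, -b_k)ᵀ` of `T`, `k ∈ V \ {t}`. -/
theorem grid_cycle_vectors_basis (p q : ℕ) (hp : 0 < p) (hq : 0 < q)
    (s : GridVertex p q) (hs : s = (⟨0, hp⟩, ⟨0, hq⟩))
    (t : GridVertex p q) (ht : t = (⟨p - 1, by omega⟩, ⟨q - 1, by omega⟩))
    (b : GridVertex p q → ℝ)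
    (hb : ∀ v, b v = if v = s then 1 else if v = t then -1 else 0)
    (fam : (Fin (p - 1) × Fin (q - 1)) ⊕ Unit → (GridArc p q ⊕ Unit → ℝ))
    (hfam : fam = Sum.elim
      (fun ij => Sum.elim (squareCycleVec p q ij) (fun _ => 0))
      (fun _ => Sum.elim (hookPathVec p q) (fun _ => 1))) :
    (Fintype.card ((Fin (p - 1) × Fin (q - 1)) ⊕ Unit) : ℤ) =
        ((2 * (p : ℤ) * q - p - q) - (p : ℤ) * q) + 2 ∧
    LinearIndependent ℝ fam ∧
    ∀ k : GridVertex p q, k ≠ t → ∀ idx,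
      ∑ r : GridArc p q ⊕ Unit,
        fam idx r * Sum.elim (gridIncidence p q k) (fun _ => -(b k)) r = 0 := by
  subst hfam hs ht
  refine ⟨?_, ?_, ?_⟩
  · -- cardinality
    have hc : Fintype.card ((Fin (p - 1) × Fin (q - 1)) ⊕ Unit) = (p-1)*(q-1)+1 := by
      simp
    rw [hc]
    push_cast [Nat.cast_sub hp, Nat.cast_sub hq]
    ring
  · -- linear independence
    rw [Fintype.linearIndependent_iff]
    intro g hg
    have hg' : ∀ e : GridArc p q ⊕ Unit, (∑ i : (Fin (p - 1) × Fin (q - 1)) ⊕ Unit,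
        g i * Sum.elim
          (fun ij => Sum.elim (squareCycleVec p q ij) (fun _ => (0:ℝ)))
          (fun _ => Sum.elim (hookPathVec p q) (fun _ => 1)) i e) = 0 := by
      intro e
      have := congrFun hg e
      simpa [Finset.sum_apply] using this
    have hg0 : g (Sum.inr ()) = 0 := by
      have := hg' (Sum.inr ())
      rw [Fintype.sum_sum_type] at this
      simpa using this
    have key : ∀ jv : ℕ, ∀ (hj : jv < q - 1) (i : Fin (p-1)),
        g (Sum.inl (i, ⟨jv, hj⟩)) = 0 := by
      intro jv
      induction jv with
      | zero =>
        intro hj i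
        have h0 := hg' (Sum.inl (Sum.inr (i, ⟨0, by omega⟩)))
        rw [Fintype.sum_sum_type] at h0
        simp only [Sum.elim_inl, Sum.elim_inr] at h0
        have hsplit : ∀ x : Fin (p-1) × Fin (q-1),
            g (Sum.inl x) * squareCycleVec p q x (Sum.inr (i, ⟨0, by omega⟩))
              = (if ((i.1 : ℕ), (0:ℕ)) = (x.1.1, x.2.1 + 1) then g (Sum.inl x) else 0)
              - (if ((i.1 : ℕ), (0:ℕ)) = (x.1.1, x.2.1) then g (Sum.inl x) else 0) := by
          rintro ⟨r, c⟩
          exact ite_split' _ _ (by intro h1 h2; simp only [Prod.mk.injEq] at h1 h2; omega) _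
        rw [Finset.sum_congr rfl (fun x _ => hsplit x), Finset.sum_sub_distrib] at h0
        rw [sum_cond_zero _ _ (by intro x h; simp only [Prod.mk.injEq] at h; omega)] at h0
        rw [sum_cond_eq (fun x => g (Sum.inl x)) _ (i, ⟨0, hj⟩)
          (by intro x
              simp only [Prod.ext_iff, Prod.mk.injEq, Fin.ext_iff, Fin.val_mk]
              omega)] at h0
        simp only [Sum.elim_inr, hg0, zero_mul, Fintype.sum_unique] at h0
        linarith [h0]
      | succ jv ih =>
        intro hj i
        have h0 := hg' (Sum.inl (Sum.inr (i, ⟨jv + 1, by omega⟩)))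
        rw [Fintype.sum_sum_type] at h0
        simp only [Sum.elim_inl, Sum.elim_inr] at h0
        have hsplit : ∀ x : Fin (p-1) × Fin (q-1),
            g (Sum.inl x) * squareCycleVec p q x (Sum.inr (i, ⟨jv + 1, by omega⟩))
              = (if ((i.1 : ℕ), jv + 1) = (x.1.1, x.2.1 + 1) then g (Sum.inl x) else 0)
              - (if ((i.1 : ℕ), jv + 1) = (x.1.1, x.2.1) then g (Sum.inl x) else 0) := by
          rintro ⟨r, c⟩
          exact ite_split' _ _ (by intro h1 h2; simp only [Prod.mk.injEq] at h1 h2; omega) _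
        rw [Finset.sum_congr rfl (fun x _ => hsplit x), Finset.sum_sub_distrib] at h0
        rw [sum_cond_eq (fun x => g (Sum.inl x)) _ (i, ⟨jv, by omega⟩)
          (by intro x
              simp only [Prod.ext_iff, Prod.mk.injEq, Fin.ext_iff, Fin.val_mk]
              omega)] at h0
        rw [sum_cond_eq (fun x => g (Sum.inl x)) _ (i, ⟨jv + 1, hj⟩)
          (by intro x
              simp only [Prod.ext_iff, Prod.mk.injEq, Fin.ext_iff, Fin.val_mk]
              omega)] at h0
        rw [ih (by omega) i] at h0
        simp only [Sum.elim_inr, hg0, zero_mul, Fintype.sum_unique] at h0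
        linarith [h0]
    rintro (⟨ii, jj⟩ | u)
    · exact key jj.1 jj.isLt ii
    · cases u; exact hg0
  · -- orthogonality
    rintro ⟨ka, kb⟩ hk idx
    have hk' : ¬(ka.1 = p - 1 ∧ kb.1 = q - 1) := by
      intro h
      exact hk (by rw [Prod.ext_iff, Fin.ext_iff, Fin.ext_iff]; exact ⟨h.1, h.2⟩)
    rcases idx with ⟨i, j⟩ | u
    · -- square cycle
      rw [Fintype.sum_sum_type]
      simp only [Sum.elim_inl, Sum.elim_inr, Fintype.sum_unique, zero_mul, add_zero]
      rw [Fintype.sum_sum_type]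
      have e1 : ∀ x : Fin p × Fin (q-1),
          squareCycleVec p q (i, j) (Sum.inl x) * gridIncidence p q (ka, kb) (Sum.inl x)
            = (if (x.1.1, x.2.1) = (i.1, j.1) then gridIncidence p q (ka, kb) (Sum.inl x) else 0)
            - (if (x.1.1, x.2.1) = (i.1 + 1, j.1) then gridIncidence p q (ka, kb) (Sum.inl x) else 0) := by
        rintro ⟨r, c⟩
        exact ite_split _ _ (by intro h1 h2; simp only [Prod.mk.injEq] at h1 h2; omega) _
      have e2 : ∀ x : Fin (p-1) × Fin q,
          squareCycleVec p q (i, j) (Sum.inr x) * gridIncidence p q (ka, kb) (Sum.inr x)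
            = (if (x.1.1, x.2.1) = (i.1, j.1 + 1) then gridIncidence p q (ka, kb) (Sum.inr x) else 0)
            - (if (x.1.1, x.2.1) = (i.1, j.1) then gridIncidence p q (ka, kb) (Sum.inr x) else 0) := by
        rintro ⟨r, c⟩
        exact ite_split _ _ (by intro h1 h2; simp only [Prod.mk.injEq] at h1 h2; omega) _
      rw [Finset.sum_congr rfl (fun x _ => e1 x), Finset.sum_sub_distrib,
          Finset.sum_congr rfl (fun x _ => e2 x), Finset.sum_sub_distrib]
      rw [sum_pair_delta _ _ _ (by omega) (by exact j.isLt),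
          sum_pair_delta _ _ _ (by omega) (by exact j.isLt),
          sum_pair_delta _ _ _ (by exact i.isLt) (by omega),
          sum_pair_delta _ _ _ (by exact i.isLt) (by omega)]
      simp only [gridIncidence, gridSrc, gridTgt, Prod.mk.injEq, Fin.ext_iff]
      have hi := i.isLt; have hj := j.isLt
      split_ifs <;> first | omega | norm_num
    · -- hook path
      rw [Fintype.sum_sum_type]
      simp only [Sum.elim_inl, Sum.elim_inr, Fintype.sum_unique]
      rw [Fintype.sum_sum_type, Fintype.sum_prod_type, Fintype.sum_prod_type]
      set F : ℕ → ℝ := fun n => if ka.1 = 0 ∧ kb.1 = n then 1 else 0 with hF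
      set G0 : ℕ → ℝ := fun n => if ka.1 = n ∧ kb.1 = q - 1 then 1 else 0 with hG0
      have e1 : ∀ (r : Fin p) (c : Fin (q-1)),
          hookPathVec p q (Sum.inl (r, c)) * gridIncidence p q (ka, kb) (Sum.inl (r, c))
            = if r = (⟨0, hp⟩ : Fin p) then gridIncidence p q (ka, kb) (Sum.inl (r, c)) else 0 := by
        intro r c
        show (if r.1 = 0 then (1:ℝ) else 0) * _ = _
        by_cases h : r.1 = 0 <;> simp [h, Fin.ext_iff]
      have e2 : ∀ (r : Fin (p-1)) (c : Fin q),
          hookPathVec p q (Sum.inr (r, c)) * gridIncidence p q (ka, kb) (Sum.inr (r, c))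
            = if c = (⟨q - 1, by omega⟩ : Fin q) then gridIncidence p q (ka, kb) (Sum.inr (r, c)) else 0 := by
        intro r c
        show (if c.1 = q - 1 then (1:ℝ) else 0) * _ = _
        by_cases h : c.1 = q - 1 <;> simp [h, Fin.ext_iff]
      have s1 : (∑ r : Fin p, ∑ c : Fin (q-1),
          hookPathVec p q (Sum.inl (r, c)) * gridIncidence p q (ka, kb) (Sum.inl (r, c)))
            = F 0 - F (q - 1) := by
        rw [Finset.sum_congr rfl (fun r _ => Finset.sum_congr rfl (fun c _ => e1 r c))]
        rw [Finset.sum_congr rfl (fun r _ => by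
          split_ifs with h <;> simp [h] :
          ∀ r ∈ univ, (∑ c : Fin (q-1), if r = (⟨0, hp⟩ : Fin p) then gridIncidence p q (ka, kb) (Sum.inl (r, c)) else 0)
            = if r = (⟨0, hp⟩ : Fin p) then ∑ c : Fin (q-1), gridIncidence p q (ka, kb) (Sum.inl (r, c)) else 0)]
        rw [Finset.sum_ite_eq' univ (⟨0, hp⟩ : Fin p)]
        simp only [Finset.mem_univ, if_true]
        have e3 : ∀ c : Fin (q-1), gridIncidence p q (ka, kb) (Sum.inl (⟨0, hp⟩, c))
            = F c.1 - F (c.1 + 1) := by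
          intro c
          have hc := c.isLt
          simp only [gridIncidence, gridSrc, gridTgt, hF, Prod.mk.injEq, Fin.ext_iff]
          split_ifs <;> first | omega | norm_num
        rw [Finset.sum_congr rfl (fun c _ => e3 c)]
        rw [show (∑ c : Fin (q-1), (F c.1 - F (c.1 + 1)))
            = ∑ n ∈ range (q-1), (F n - F (n + 1)) from
          Fin.sum_univ_eq_sum_range (fun n => F n - F (n + 1)) (q - 1)]
        exact Finset.sum_range_sub' F (q - 1)
      have s2 : (∑ r : Fin (p-1), ∑ c : Fin q,
          hookPathVec p q (Sum.inr (r, c)) * gridIncidence p q (ka, kb) (Sum.inr (r, c)))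
            = G0 0 - G0 (p - 1) := by
        rw [Finset.sum_congr rfl (fun r _ => Finset.sum_congr rfl (fun c _ => e2 r c))]
        rw [Finset.sum_comm]
        rw [Finset.sum_congr rfl (fun c _ => by
          split_ifs with h <;> simp [h] :
          ∀ c ∈ univ, (∑ r : Fin (p-1), if c = (⟨q - 1, by omega⟩ : Fin q) then gridIncidence p q (ka, kb) (Sum.inr (r, c)) else 0)
            = if c = (⟨q - 1, by omega⟩ : Fin q) then ∑ r : Fin (p-1), gridIncidence p q (ka, kb) (Sum.inr (r, c)) else 0)]
        rw [Finset.sum_ite_eq' univ (⟨q - 1, by omega⟩ : Fin q)]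
        simp only [Finset.mem_univ, if_true]
        have e3 : ∀ r : Fin (p-1), gridIncidence p q (ka, kb) (Sum.inr (r, ⟨q - 1, by omega⟩))
            = G0 r.1 - G0 (r.1 + 1) := by
          intro r
          have hr := r.isLt
          simp only [gridIncidence, gridSrc, gridTgt, hG0, Prod.mk.injEq, Fin.ext_iff]
          split_ifs <;> first | omega | norm_num
        rw [Finset.sum_congr rfl (fun r _ => e3 r)]
        rw [show (∑ r : Fin (p-1), (G0 r.1 - G0 (r.1 + 1)))
            = ∑ n ∈ range (p-1), (G0 n - G0 (n + 1)) from
          Fin.sum_univ_eq_sum_range (fun n => G0 n - G0 (n + 1)) (p - 1)]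
        exact Finset.sum_range_sub' G0 (p - 1)
      rw [s1, s2, hb]
      simp only [hF, hG0, Prod.mk.injEq, Fin.ext_iff]
      split_ifs <;> first | omega | norm_num
end
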